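/- Let R be a finite commutative ring with identity admitting a generating character. Then for every submodule C ⊆ Rⁿ, the double dot-product dual satisfies (C^⊥⊥)^⊥⊥ = C, where C^⊥⊥ = {v ∈ Rⁿ : v·a = 0 for all a ∈ C}. -/
import Mathlib


open Finset
open scoped Classical

variable {R : Type*} [CommRing R] [Fintype R]

/-- `χ` is a generating character of the finite commutative ring `R`:  the map `r ↦ r·χ`
(where `(r·χ)(a) = χ(r·a)`) is an `R`-module isomorphism from `R` to the character module
`R̂` (bijective, additive, and compatible with the scalar multiplications). -/
def IsGeneratingChar (χ : AddChar R ℂ) : Prop :=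
  Function.Bijective (fun r : R => χ.mulShift r) ∧
  (∀ r s : R, χ.mulShift (r + s) = χ.mulShift r * χ.mulShift s) ∧
  (∀ r s a : R, χ.mulShift (r * s) a = χ.mulShift s (r * a))

/-- The character `χ_v : a ↦ χ(v·a)` of `(Rⁿ, +)`, where `v·a = Σ_i v_i a_i` is the dot
product. -/
noncomputable def dotChar {n : ℕ} (χ : AddChar R ℂ) (v : Fin n → R) :
    AddChar (Fin n → R) ℂ :=
  χ.compAddMonoidHom
    { toFun := fun a => ∑ i, v i * a i
      map_zero' := by simp
      map_add' := fun a b => by simp [mul_add, Finset.sum_add_distrib] }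

/-- The dot-product dual `S^⊥⊥ = {v ∈ Rⁿ : v·a = 0 for all a ∈ S}` of a set `S ⊆ Rⁿ`. -/
def dotDual {n : ℕ} (S : Set (Fin n → R)) : Set (Fin n → R) :=
  {v : Fin n → R | ∀ a ∈ S, ∑ i, v i * a i = 0}

/- ### Auxiliary material -/

lemma addChar_map_sum {A M ι : Type*} [AddCommMonoid A] [CommMonoid M] (ψ : AddChar A M)
    (s : Finset ι) (f : ι → A) : ψ (∑ i ∈ s, f i) = ∏ i ∈ s, ψ (f i) := by
  induction s using Finset.cons_induction with
  | empty => simp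
  | cons i s hi ih => rw [Finset.sum_cons, Finset.prod_cons, AddChar.map_add_eq_mul, ih]

/-- Lift an additive character vanishing on a subgroup to the quotient. -/
noncomputable def quotChar {G : Type*} [AddCommGroup G] (H : AddSubgroup G) (ψ : AddChar G ℂ)
    (hψ : ∀ a ∈ H, ψ a = 1) : AddChar (G ⧸ H) ℂ where
  toFun := Quotient.lift (ψ : G → ℂ) (fun a b h => by
    have hm : -a + b ∈ H := QuotientAddGroup.leftRel_apply.mp h
    have : ψ (a + (-a + b)) = ψ a * ψ (-a + b) := AddChar.map_add_eq_mul ψ _ _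
    rw [hψ _ hm, mul_one] at this
    rw [← this]; congr 1; abel)
  map_zero_eq_one' := by
    show ψ 0 = 1
    exact AddChar.map_zero_eq_one ψ
  map_add_eq_mul' := by
    rintro ⟨a⟩ ⟨b⟩
    exact AddChar.map_add_eq_mul ψ a b

lemma quotChar_comp {G : Type*} [AddCommGroup G] (H : AddSubgroup G) (ψ : AddChar G ℂ)
    (hψ : ∀ a ∈ H, ψ a = 1) :
    (quotChar H ψ hψ).compAddMonoidHom (QuotientAddGroup.mk' H) = ψ := rfl

/-- The number of characters of a finite abelian group vanishing on a subgroup `H`,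
multiplied by `|H|`, equals the order of the group. -/
lemma annihilator_card {G : Type*} [AddCommGroup G] [Fintype G] (H : AddSubgroup G) :
    Nat.card {ψ : AddChar G ℂ // ∀ a ∈ H, ψ a = 1} * Nat.card H = Nat.card G := by
  have e : AddChar (G ⧸ H) ℂ ≃ {ψ : AddChar G ℂ // ∀ a ∈ H, ψ a = 1} := by
    refine Equiv.ofBijective
      (fun φ => ⟨φ.compAddMonoidHom (QuotientAddGroup.mk' H), fun a ha => by
        simp [AddChar.compAddMonoidHom_apply, (QuotientAddGroup.eq_zero_iff a).mpr ha]⟩) ⟨?_, ?_⟩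
    · intro φ₁ φ₂ h
      exact AddChar.compAddMonoidHom_injective_left _
        (QuotientAddGroup.mk'_surjective H) (congrArg Subtype.val h)
    · rintro ⟨ψ, hψ⟩
      exact ⟨quotChar H ψ hψ, Subtype.ext (quotChar_comp H ψ hψ)⟩
  have hq : Nat.card (AddChar (G ⧸ H) ℂ) = Nat.card (G ⧸ H) := by
    have : Fintype (G ⧸ H) := Fintype.ofFinite _
    simp [Nat.card_eq_fintype_card, AddChar.card_eq]
  rw [← Nat.card_congr e, hq, ← AddSubgroup.card_eq_card_quotient_mul_card_addSubgroup]

omit [Fintype R] in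
lemma dotChar_apply {n : ℕ} (χ : AddChar R ℂ) (v a : Fin n → R) :
    dotChar χ v a = χ (∑ i, v i * a i) := rfl

omit [Fintype R] in
lemma sum_mul_single {n : ℕ} (v : Fin n → R) (i : Fin n) (r : R) :
    ∑ j, v j * (Pi.single i r : Fin n → R) j = v i * r := by
  rw [Finset.sum_eq_single i]
  · simp
  · intro j _ hj; simp [Pi.single_eq_of_ne hj]
  · simp

omit [Fintype R] in
lemma dotChar_bijective {n : ℕ} {χ : AddChar R ℂ} (hχ : IsGeneratingChar χ) :
    Function.Bijective (dotChar (n := n) χ) := by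
  constructor
  · intro v w h
    funext i
    apply hχ.1.injective
    ext r
    have h' : dotChar χ v (Pi.single i r) = dotChar χ w (Pi.single i r) := by rw [h]
    simpa [dotChar_apply, sum_mul_single, AddChar.mulShift_apply] using h'
  · intro ψ
    choose v hv using fun i : Fin n =>
      hχ.1.surjective (ψ.compAddMonoidHom (AddMonoidHom.single (fun _ : Fin n => R) i))
    refine ⟨v, ?_⟩
    ext a
    have ha : a = ∑ i, Pi.single i (a i) := (Finset.univ_sum_single a).symm
    rw [dotChar_apply, addChar_map_sum]
    conv_rhs => rw [ha]
    rw [addChar_map_sum]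
    refine Finset.prod_congr rfl fun i _ => ?_
    have := congrFun (congrArg DFunLike.coe (hv i)) (a i)
    simpa [AddChar.mulShift_apply, AddChar.compAddMonoidHom_apply] using this

omit [Fintype R] in
lemma mem_dotDual_iff {n : ℕ} {χ : AddChar R ℂ} (hχ : IsGeneratingChar χ)
    (C : Submodule R (Fin n → R)) (v : Fin n → R) :
    v ∈ dotDual (C : Set (Fin n → R)) ↔ ∀ a ∈ C, dotChar χ v a = 1 := by
  constructor
  · intro hv a ha
    rw [dotChar_apply, hv a ha, AddChar.map_zero_eq_one]
  · intro h a ha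
    have key : χ.mulShift (∑ i, v i * a i) = χ.mulShift 0 := by
      ext r
      rw [AddChar.mulShift_apply, AddChar.mulShift_apply, zero_mul, AddChar.map_zero_eq_one]
      have hs : (∑ i, v i * a i) * r = ∑ i, v i * (r • a) i := by
        rw [Finset.sum_mul]
        refine Finset.sum_congr rfl fun i _ => ?_
        simp [smul_eq_mul]; ring
      rw [hs]
      have := h (r • a) (C.smul_mem r ha)
      rw [dotChar_apply] at this
      exact this
    exact hχ.1.injective key
  
/-- The dot-product dual of a submodule is a submodule. -/
def dualSubmodule {n : ℕ} (C : Submodule R (Fin n → R)) : Submodule R (Fin n → R) where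
  carrier := dotDual (C : Set (Fin n → R))
  add_mem' := fun {v} {w} hv hw a ha => by
    simp only [Pi.add_apply, add_mul, Finset.sum_add_distrib, hv a ha, hw a ha, add_zero]
  zero_mem' := fun a _ => by simp
  smul_mem' := fun r v hv a ha => by
    simp only [Pi.smul_apply, smul_eq_mul, mul_assoc, ← Finset.mul_sum, hv a ha, mul_zero]

lemma card_dual_mul {n : ℕ} {χ : AddChar R ℂ} (hχ : IsGeneratingChar χ)
    (C : Submodule R (Fin n → R)) :
    Nat.card (dotDual (C : Set (Fin n → R))) * Nat.card C = Nat.card (Fin n → R) := by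
  have e : dotDual (C : Set (Fin n → R)) ≃
      {ψ : AddChar (Fin n → R) ℂ // ∀ a ∈ C.toAddSubgroup, ψ a = 1} := by
    refine Equiv.ofBijective
      (fun v => ⟨dotChar χ v.1, fun a ha => ((mem_dotDual_iff hχ C v.1).mp v.2) a ha⟩)
      ⟨?_, ?_⟩
    · intro v w h
      exact Subtype.ext ((dotChar_bijective hχ).injective (congrArg Subtype.val h))
    · rintro ⟨ψ, hψ⟩
      obtain ⟨v, hv⟩ := (dotChar_bijective hχ).surjective ψ
      exact ⟨⟨v, (mem_dotDual_iff hχ C v).mpr (by rw [hv]; exact hψ)⟩, Subtype.ext hv⟩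
  rw [Nat.card_congr e]
  exact annihilator_card (G := Fin n → R) C.toAddSubgroup

/-- **Double annihilator property.**  If the finite commutative ring `R` admits a
generating character, then every submodule `C ⊆ Rⁿ` satisfies `(C^⊥⊥)^⊥⊥ = C`. -/
theorem dotDual_dotDual (n : ℕ) (hex : ∃ χ : AddChar R ℂ, IsGeneratingChar χ)
    (C : Submodule R (Fin n → R)) :
    dotDual (dotDual (C : Set (Fin n → R))) = (C : Set (Fin n → R)) := by
  obtain ⟨χ, hχ⟩ := hex
  have h1 := card_dual_mul hχ C
  have h2 : Nat.card (dotDual (dotDual (C : Set (Fin n → R)))) *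
      Nat.card (dotDual (C : Set (Fin n → R))) = Nat.card (Fin n → R) :=
    card_dual_mul hχ (dualSubmodule C)
  have hsub : (C : Set (Fin n → R)) ⊆ dotDual (dotDual (C : Set (Fin n → R))) := by
    intro v hv a ha
    calc ∑ i, v i * a i = ∑ i, a i * v i := by
          exact Finset.sum_congr rfl fun i _ => mul_comm _ _
      _ = 0 := ha v hv
  have hdpos : 0 < Nat.card (dotDual (C : Set (Fin n → R))) := by
    have : Nonempty (dotDual (C : Set (Fin n → R))) :=
      ⟨⟨0, fun a _ => by simp⟩⟩
    exact Nat.card_pos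
  have hcard : Nat.card (dotDual (dotDual (C : Set (Fin n → R)))) = Nat.card C := by
    refine Nat.eq_of_mul_eq_mul_right hdpos ?_
    rw [h2, ← h1, mul_comm]
  refine (Set.eq_of_subset_of_ncard_le hsub ?_ (Set.toFinite _)).symm
  rw [← Nat.card_coe_set_eq, ← Nat.card_coe_set_eq, hcard]
  rfl
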